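/- arXiv:2311.01274 — 5 statements merged into one kernel-verified Lean document; each statement's English description precedes it below -/
import Mathlib

section
/- Let ρ : [a,b] → ℝ be continuous and strictly positive with a < b, and let φ : [0,1] → ℝ be continuously differentiable with φ(0) = a, φ(1) = b, and suppose there is a constant C such that ρ(φ(ξ))·φ'(ξ) = C for all ξ ∈ [0,1] (i.e., φ solves the mesh PDE (ρ(x)x_ξ)_ξ = 0 with x(0) = a, x(1) = b). Then C = ∫_a^b ρ(t) dt > 0, φ is strictly increasing (hence a bijection of [0,1] onto [a,b]), and for every integer N ≥ 1 the mesh with points x_i = φ(i/N), i = 0, 1, …, N, equidistributes ρ. -/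
open Set

/-- If `φ ≤ φ t` on `Ioc t s` and `φ` has derivative `d` at `t` within `Ioc t s`,
then `d ≤ 0`. -/
lemma mesh_slope_right_nonpos {φ : ℝ → ℝ} {d t s : ℝ} (hts : t < s)
    (hd : HasDerivWithinAt φ d (Set.Ioc t s) t)
    (h : ∀ ξ ∈ Set.Ioc t s, φ ξ ≤ φ t) : d ≤ 0 := by
  rw [hasDerivWithinAt_iff_tendsto_slope] at hd
  have hsub : Set.Ioc t s \ {t} = Set.Ioc t s := by
    apply Set.diff_singleton_eq_self; simp
  rw [hsub] at hd
  haveI : (nhdsWithin t (Set.Ioc t s)).NeBot := by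
    rw [nhdsWithin_Ioc_eq_nhdsGT hts]; infer_instance
  refine le_of_tendsto hd ?_
  filter_upwards [self_mem_nhdsWithin] with ξ hξ
  rw [slope_def_field]
  have h1 : φ ξ - φ t ≤ 0 := sub_nonpos.mpr (h ξ hξ)
  have h2 : 0 < ξ - t := sub_pos.mpr hξ.1
  exact div_nonpos_of_nonpos_of_nonneg h1 h2.le

/-- If `φ t ≤ φ` on `Ico s t` and `φ` has derivative `d` at `t` within `Ico s t`,
then `d ≤ 0`. -/
lemma mesh_slope_left_nonpos {φ : ℝ → ℝ} {d t s : ℝ} (hts : s < t)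
    (hd : HasDerivWithinAt φ d (Set.Ico s t) t)
    (h : ∀ ξ ∈ Set.Ico s t, φ t ≤ φ ξ) : d ≤ 0 := by
  rw [hasDerivWithinAt_iff_tendsto_slope] at hd
  have hsub : Set.Ico s t \ {t} = Set.Ico s t := by
    apply Set.diff_singleton_eq_self; simp
  rw [hsub] at hd
  haveI : (nhdsWithin t (Set.Ico s t)).NeBot := by
    rw [nhdsWithin_Ico_eq_nhdsLT hts]; infer_instance
  refine le_of_tendsto hd ?_
  filter_upwards [self_mem_nhdsWithin] with ξ hξ
  rw [slope_def_field]
  have h1 : 0 ≤ φ ξ - φ t := sub_nonneg.mpr (h ξ hξ)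
  have h2 : ξ - t < 0 := sub_neg.mpr hξ.2
  exact div_nonpos_of_nonneg_of_nonpos h1 h2.le

/-- Let `ρ : [a,b] → ℝ` be continuous and strictly positive with `a < b`, and let
`φ : [0,1] → ℝ` be continuously differentiable with `φ(0) = a`, `φ(1) = b`,
and suppose there is a constant `C` such that `ρ(φ(ξ))·φ'(ξ) = C` for all
`ξ ∈ [0,1]` (i.e. `φ` solves the mesh PDE `(ρ(x)x_ξ)_ξ = 0` with
`x(0) = a`, `x(1) = b`).  Then `C = ∫_a^b ρ(t) dt > 0`, `φ` is strictly
increasing (hence a bijection of `[0,1]` onto `[a,b]`), and for every integer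
`N ≥ 1` the mesh with points `x_i = φ(i/N)`, `i = 0, 1, …, N`,
equidistributes `ρ`. -/
theorem mesh_generating_function_equidistributes
    (a b : ℝ) (hab : a < b) (ρ : ℝ → ℝ)
    (hρc : ContinuousOn ρ (Set.Icc a b))
    (hρpos : ∀ x ∈ Set.Icc a b, 0 < ρ x)
    (φ φ' : ℝ → ℝ)
    (hφderiv : ∀ ξ ∈ Set.Icc (0 : ℝ) 1, HasDerivWithinAt φ (φ' ξ) (Set.Icc 0 1) ξ)
    (hφ'cont : ContinuousOn φ' (Set.Icc 0 1))
    (hφ0 : φ 0 = a) (hφ1 : φ 1 = b)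
    (C : ℝ) (hC : ∀ ξ ∈ Set.Icc (0 : ℝ) 1, ρ (φ ξ) * φ' ξ = C) :
    C = (∫ t in a..b, ρ t) ∧ 0 < C ∧
    StrictMonoOn φ (Set.Icc 0 1) ∧
    φ '' Set.Icc 0 1 = Set.Icc a b ∧
    (∀ N : ℕ, 1 ≤ N → ∀ i : ℕ, 1 ≤ i → i ≤ N →
      ∫ t in (φ (((i : ℝ) - 1) / N))..(φ ((i : ℝ) / N)), ρ t
        = (1 / (N : ℝ)) * ∫ t in a..b, ρ t) := by
  have hφcont : ContinuousOn φ (Set.Icc 0 1) :=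
    fun x hx => (hφderiv x hx).continuousWithinAt
  -- Step 1 : C > 0
  have hCpos : 0 < C := by
    by_contra hle
    push_neg at hle
    -- last time φ ≤ a
    set K1 : Set ℝ := Set.Icc 0 1 ∩ φ ⁻¹' (Set.Iic a) with hK1def
    have hK1c : IsClosed K1 := hφcont.preimage_isClosed_of_isClosed isClosed_Icc isClosed_Iic
    have hK1cpt : IsCompact K1 :=
      IsCompact.of_isClosed_subset isCompact_Icc hK1c Set.inter_subset_left
    have hK1ne : K1.Nonempty := ⟨0, ⟨Set.left_mem_Icc.mpr zero_le_one, by simp [hφ0]⟩⟩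
    set t1 := sSup K1 with ht1def
    have ht1K : t1 ∈ K1 := hK1cpt.sSup_mem hK1ne
    have ht1I : t1 ∈ Set.Icc (0:ℝ) 1 := ht1K.1
    have ht1a : φ t1 ≤ a := ht1K.2
    have ht1lt : t1 < 1 := by
      rcases lt_or_eq_of_le ht1I.2 with h | h
      · exact h
      · exfalso; rw [h] at ht1a; rw [hφ1] at ht1a; linarith
    have hgt : ∀ ξ ∈ Set.Ioc t1 1, a < φ ξ := by
      intro ξ hξ
      by_contra hle'
      push_neg at hle'
      have : ξ ∈ K1 := ⟨⟨le_trans ht1I.1 hξ.1.le, hξ.2⟩, hle'⟩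
      exact absurd (le_csSup hK1cpt.bddAbove this) (not_le.mpr hξ.1)
    -- φ t1 = a
    have ht1eq : φ t1 = a := by
      refine le_antisymm ht1a ?_
      haveI : (nhdsWithin t1 (Set.Ioc t1 1)).NeBot := by
        rw [nhdsWithin_Ioc_eq_nhdsGT ht1lt]; infer_instance
      have hcw : Filter.Tendsto φ (nhdsWithin t1 (Set.Ioc t1 1)) (nhds (φ t1)) :=
        ((hφcont t1 ht1I).mono (Set.Ioc_subset_Icc_self.trans
          (Set.Icc_subset_Icc ht1I.1 le_rfl)))
      refine ge_of_tendsto hcw ?_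
      filter_upwards [self_mem_nhdsWithin] with ξ hξ using (hgt ξ hξ).le
    -- first time after t1 that φ ≥ b
    set K2 : Set ℝ := Set.Icc t1 1 ∩ φ ⁻¹' (Set.Ici b) with hK2def
    have hK2c : IsClosed K2 :=
      ((hφcont.mono (Set.Icc_subset_Icc ht1I.1 le_rfl)).preimage_isClosed_of_isClosed
        isClosed_Icc isClosed_Ici)
    have hK2cpt : IsCompact K2 :=
      IsCompact.of_isClosed_subset isCompact_Icc hK2c Set.inter_subset_left
    have hK2ne : K2.Nonempty := ⟨1, ⟨Set.right_mem_Icc.mpr ht1lt.le, by simp [hφ1]⟩⟩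
    set t2 := sInf K2 with ht2def
    have ht2K : t2 ∈ K2 := hK2cpt.sInf_mem hK2ne
    have ht2I : t2 ∈ Set.Icc t1 1 := ht2K.1
    have ht2b : b ≤ φ t2 := ht2K.2
    have ht12 : t1 < t2 := by
      rcases lt_or_eq_of_le ht2I.1 with h | h
      · exact h
      · exfalso; rw [← h] at ht2b; rw [ht1eq] at ht2b; linarith
    have hlt : ∀ ξ ∈ Set.Ico t1 t2, φ ξ < b := by
      intro ξ hξ
      by_contra hle'
      push_neg at hle'
      have : ξ ∈ K2 := ⟨⟨hξ.1, le_trans hξ.2.le ht2I.2⟩, hle'⟩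
      exact absurd (csInf_le hK2cpt.bddBelow this) (not_le.mpr hξ.2)
    -- φ t2 ≤ b by left continuity
    have ht2le : φ t2 ≤ b := by
      haveI : (nhdsWithin t2 (Set.Ico t1 t2)).NeBot := by
        rw [nhdsWithin_Ico_eq_nhdsLT ht12]; infer_instance
      have hcw : Filter.Tendsto φ (nhdsWithin t2 (Set.Ico t1 t2)) (nhds (φ t2)) := by
        refine (hφcont t2 ⟨le_trans ht1I.1 ht12.le, ht2I.2⟩).mono ?_
        intro y hy
        exact ⟨le_trans ht1I.1 hy.1, le_trans hy.2.le ht2I.2⟩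
      refine le_of_tendsto hcw ?_
      filter_upwards [self_mem_nhdsWithin] with y hy using (hlt y hy).le
    -- on [t1, t2] the map φ stays in [a,b]
    have hmem : ∀ ξ ∈ Set.Icc t1 t2, φ ξ ∈ Set.Icc a b := by
      intro ξ hξ
      constructor
      · rcases eq_or_lt_of_le hξ.1 with h | h
        · rw [← h, ht1eq]
        · exact (hgt ξ ⟨h, le_trans hξ.2 ht2I.2⟩).le
      · rcases eq_or_lt_of_le hξ.2 with h | h
        · rw [h]; exact ht2le
        · exact (hlt ξ ⟨hξ.1, h⟩).le
    -- φ is antitone on [t1,t2] since φ' ≤ 0 there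
    have hIccsub : Set.Icc t1 t2 ⊆ Set.Icc (0:ℝ) 1 :=
      Set.Icc_subset_Icc ht1I.1 ht2I.2
    have hder : ∀ x ∈ interior (Set.Icc t1 t2), HasDerivAt φ (φ' x) x := by
      intro x hx
      rw [interior_Icc] at hx
      have hx01 : x ∈ Set.Ioo (0:ℝ) 1 :=
        ⟨lt_of_le_of_lt ht1I.1 hx.1, lt_of_lt_of_le hx.2 ht2I.2⟩
      exact (hφderiv x (Set.Ioo_subset_Icc_self hx01)).hasDerivAt
        (Icc_mem_nhds hx01.1 hx01.2)
    have hanti : AntitoneOn φ (Set.Icc t1 t2) := by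
      refine antitoneOn_of_deriv_nonpos (convex_Icc t1 t2) (hφcont.mono hIccsub) ?_ ?_
      · intro x hx
        exact ((hder x hx).differentiableAt).differentiableWithinAt
      · intro x hx
        rw [(hder x hx).deriv]
        have hx' : x ∈ Set.Icc t1 t2 := interior_subset hx
        have hρ : 0 < ρ (φ x) := hρpos _ (hmem x hx')
        have hCx := hC x (hIccsub hx')
        nlinarith
    have := hanti (Set.left_mem_Icc.mpr ht12.le) (Set.right_mem_Icc.mpr ht12.le) ht12.le
    rw [ht1eq] at this
    linarith
  -- Step 2 : φ maps [0,1] into [a,b]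
  have hlow : ∀ ξ ∈ Set.Icc (0:ℝ) 1, a ≤ φ ξ := by
    by_contra hcon
    push_neg at hcon
    obtain ⟨s, hsI, hs⟩ := hcon
    set K : Set ℝ := Set.Icc 0 s ∩ φ ⁻¹' (Set.Ici a) with hKdef
    have hKc : IsClosed K :=
      ((hφcont.mono (Set.Icc_subset_Icc le_rfl hsI.2)).preimage_isClosed_of_isClosed
        isClosed_Icc isClosed_Ici)
    have hKcpt : IsCompact K :=
      IsCompact.of_isClosed_subset isCompact_Icc hKc Set.inter_subset_left
    have hKne : K.Nonempty := ⟨0, ⟨Set.left_mem_Icc.mpr hsI.1, by simp [hφ0]⟩⟩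
    set t := sSup K with htdef
    have htK : t ∈ K := hKcpt.sSup_mem hKne
    have htI : t ∈ Set.Icc 0 s := htK.1
    have hta : a ≤ φ t := htK.2
    have htlt : t < s := by
      rcases lt_or_eq_of_le htI.2 with h | h
      · exact h
      · exfalso; rw [h] at hta; linarith
    have hgt : ∀ ξ ∈ Set.Ioc t s, φ ξ < a := by
      intro ξ hξ
      by_contra hle'
      push_neg at hle'
      have : ξ ∈ K := ⟨⟨le_trans htI.1 hξ.1.le, hξ.2⟩, hle'⟩
      exact absurd (le_csSup hKcpt.bddAbove this) (not_le.mpr hξ.1)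
    have hteq : φ t = a := by
      refine le_antisymm ?_ hta
      haveI : (nhdsWithin t (Set.Ioc t s)).NeBot := by
        rw [nhdsWithin_Ioc_eq_nhdsGT htlt]; infer_instance
      have hcw : Filter.Tendsto φ (nhdsWithin t (Set.Ioc t s)) (nhds (φ t)) := by
        refine (hφcont t ⟨htI.1, le_trans htI.2 hsI.2⟩).mono ?_
        intro y hy
        exact ⟨le_trans htI.1 hy.1.le, le_trans hy.2 hsI.2⟩
      refine le_of_tendsto hcw ?_
      filter_upwards [self_mem_nhdsWithin] with ξ hξ using (hgt ξ hξ).le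
    -- derivative at t is ≤ 0 but should be positive
    have htI01 : t ∈ Set.Icc (0:ℝ) 1 := ⟨htI.1, le_trans htI.2 hsI.2⟩
    have hd : HasDerivWithinAt φ (φ' t) (Set.Ioc t s) t :=
      (hφderiv t htI01).mono fun y hy => ⟨le_trans htI.1 hy.1.le, le_trans hy.2 hsI.2⟩
    have hnp : φ' t ≤ 0 := by
      refine mesh_slope_right_nonpos htlt hd ?_
      intro ξ hξ
      rw [hteq]; exact (hgt ξ hξ).le
    have hρt : 0 < ρ (φ t) := hρpos _ (by rw [hteq]; exact ⟨le_rfl, hab.le⟩)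
    have hCt := hC t htI01
    nlinarith
  have hhigh : ∀ ξ ∈ Set.Icc (0:ℝ) 1, φ ξ ≤ b := by
    by_contra hcon
    push_neg at hcon
    obtain ⟨s, hsI, hs⟩ := hcon
    set K : Set ℝ := Set.Icc s 1 ∩ φ ⁻¹' (Set.Iic b) with hKdef
    have hKc : IsClosed K :=
      ((hφcont.mono (Set.Icc_subset_Icc hsI.1 le_rfl)).preimage_isClosed_of_isClosed
        isClosed_Icc isClosed_Iic)
    have hKcpt : IsCompact K :=
      IsCompact.of_isClosed_subset isCompact_Icc hKc Set.inter_subset_left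
    have hKne : K.Nonempty := ⟨1, ⟨Set.right_mem_Icc.mpr hsI.2, by simp [hφ1]⟩⟩
    set t := sInf K with htdef
    have htK : t ∈ K := hKcpt.sInf_mem hKne
    have htI : t ∈ Set.Icc s 1 := htK.1
    have htb : φ t ≤ b := htK.2
    have htgt : s < t := by
      rcases lt_or_eq_of_le htI.1 with h | h
      · exact h
      · exfalso; rw [← h] at htb; linarith
    have hgt : ∀ ξ ∈ Set.Ico s t, b < φ ξ := by
      intro ξ hξ
      by_contra hle'
      push_neg at hle'
      have : ξ ∈ K := ⟨⟨hξ.1, le_trans hξ.2.le htI.2⟩, hle'⟩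
      exact absurd (csInf_le hKcpt.bddBelow this) (not_le.mpr hξ.2)
    have hteq : φ t = b := by
      refine le_antisymm htb ?_
      haveI : (nhdsWithin t (Set.Ico s t)).NeBot := by
        rw [nhdsWithin_Ico_eq_nhdsLT htgt]; infer_instance
      have hcw : Filter.Tendsto φ (nhdsWithin t (Set.Ico s t)) (nhds (φ t)) := by
        refine (hφcont t ⟨le_trans hsI.1 htI.1, htI.2⟩).mono ?_
        intro y hy
        exact ⟨le_trans hsI.1 hy.1, le_trans hy.2.le htI.2⟩
      refine ge_of_tendsto hcw ?_
      filter_upwards [self_mem_nhdsWithin] with ξ hξ using (hgt ξ hξ).le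
    have htI01 : t ∈ Set.Icc (0:ℝ) 1 := ⟨le_trans hsI.1 htI.1, htI.2⟩
    have hd : HasDerivWithinAt φ (φ' t) (Set.Ico s t) t :=
      (hφderiv t htI01).mono fun y hy => ⟨le_trans hsI.1 hy.1, le_trans hy.2.le htI.2⟩
    have hnp : φ' t ≤ 0 := by
      refine mesh_slope_left_nonpos htgt hd ?_
      intro ξ hξ
      rw [hteq]; exact (hgt ξ hξ).le
    have hρt : 0 < ρ (φ t) := hρpos _ (by rw [hteq]; exact ⟨hab.le, le_rfl⟩)
    have hCt := hC t htI01
    nlinarith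
  have hmaps : ∀ ξ ∈ Set.Icc (0:ℝ) 1, φ ξ ∈ Set.Icc a b :=
    fun ξ hξ => ⟨hlow ξ hξ, hhigh ξ hξ⟩
  -- Step 3 : φ' > 0 on [0,1]
  have hφ'pos : ∀ ξ ∈ Set.Icc (0:ℝ) 1, 0 < φ' ξ := by
    intro ξ hξ
    have hρ : 0 < ρ (φ ξ) := hρpos _ (hmaps ξ hξ)
    have := hC ξ hξ
    nlinarith
  -- Step 4 : strict monotonicity
  have hmono : StrictMonoOn φ (Set.Icc 0 1) := by
    refine strictMonoOn_of_deriv_pos (convex_Icc 0 1) hφcont ?_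
    intro x hx
    rw [interior_Icc] at hx
    have hd : HasDerivAt φ (φ' x) x :=
      (hφderiv x (Set.Ioo_subset_Icc_self hx)).hasDerivAt (Icc_mem_nhds hx.1 hx.2)
    rw [hd.deriv]
    exact hφ'pos x (Set.Ioo_subset_Icc_self hx)
  -- Step 5 : image
  have himage : φ '' Set.Icc 0 1 = Set.Icc a b := by
    apply Set.Subset.antisymm
    · rintro y ⟨x, hx, rfl⟩
      exact hmaps x hx
    · have := intermediate_value_Icc (zero_le_one (α := ℝ)) hφcont
      rw [hφ0, hφ1] at this
      exact this
  -- Step 6 : key substitution identity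
  have hkey : ∀ u v : ℝ, u ∈ Set.Icc (0:ℝ) 1 → v ∈ Set.Icc (0:ℝ) 1 → u ≤ v →
      (∫ t in (φ u)..(φ v), ρ t) = C * (v - u) := by
    intro u v hu hv huv
    have huIcc : Set.uIcc u v = Set.Icc u v := Set.uIcc_of_le huv
    have hsub : Set.Icc u v ⊆ Set.Icc (0:ℝ) 1 := Set.Icc_subset_Icc hu.1 hv.2
    have hsubst : (∫ x in u..v, (ρ ∘ φ) x * φ' x) = ∫ t in (φ u)..(φ v), ρ t := by
      refine intervalIntegral.integral_comp_mul_deriv'' (hφcont.mono (huIcc ▸ hsub)) ?_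
        (hφ'cont.mono (huIcc ▸ hsub)) ?_
      · intro x hx
        rw [min_eq_left huv, max_eq_right huv] at hx
        have hx01 : x ∈ Set.Ioo (0:ℝ) 1 :=
          ⟨lt_of_le_of_lt hu.1 hx.1, lt_of_lt_of_le hx.2 hv.2⟩
        exact ((hφderiv x (Set.Ioo_subset_Icc_self hx01)).hasDerivAt
          (Icc_mem_nhds hx01.1 hx01.2)).hasDerivWithinAt
      · refine hρc.mono ?_
        rintro y ⟨x, hx, rfl⟩
        exact hmaps x (hsub (huIcc ▸ hx))
    rw [← hsubst]
    have : (∫ x in u..v, (ρ ∘ φ) x * φ' x) = ∫ _x in u..v, C := by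
      refine intervalIntegral.integral_congr ?_
      intro x hx
      exact hC x (hsub (huIcc ▸ hx))
    rw [this, intervalIntegral.integral_const, smul_eq_mul, mul_comm]
  -- Step 7 : C = ∫ a..b ρ
  have hCint : C = ∫ t in a..b, ρ t := by
    have := hkey 0 1 (Set.left_mem_Icc.mpr zero_le_one)
      (Set.right_mem_Icc.mpr zero_le_one) zero_le_one
    rw [hφ0, hφ1] at this
    rw [this]; ring
  refine ⟨hCint, hCpos, hmono, himage, ?_⟩
  -- Step 8 : equidistribution
  intro N hN i hi hiN
  have hNpos : (0:ℝ) < N := by exact_mod_cast hN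
  have hi1 : (1:ℝ) ≤ i := by exact_mod_cast hi
  have hiN' : (i:ℝ) ≤ N := by exact_mod_cast hiN
  have hu : ((i:ℝ) - 1) / N ∈ Set.Icc (0:ℝ) 1 := by
    constructor
    · apply div_nonneg <;> linarith
    · rw [div_le_one hNpos]; linarith
  have hv : (i:ℝ) / N ∈ Set.Icc (0:ℝ) 1 := by
    constructor
    · positivity
    · rw [div_le_one hNpos]; linarith
  have huv : ((i:ℝ) - 1) / N ≤ (i:ℝ) / N := by
    gcongr
    · linarith
  have hval := hkey _ _ hu hv huv
  rw [hval, ← hCint]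
  have : (i:ℝ) / N - ((i:ℝ) - 1) / N = 1 / N := by
    field_simp
    ring
  rw [this, mul_comm]
end

section
/- Let ρ : [a,b] → ℝ be continuous and strictly positive with a < b. Define F(x) = ∫_a^x ρ(t) dt and φ(ξ) = F⁻¹(ξ·F(b)) for ξ ∈ [0,1]. Then φ is a well-defined, continuously differentiable, strictly increasing bijection from [0,1] onto [a,b] with φ(0) = a and φ(1) = b, and it satisfies ρ(φ(ξ))·φ'(ξ) = ∫_a^b ρ(t) dt for all ξ ∈ [0,1]; that is, φ solves the mesh PDE (ρ(x)x_ξ)_ξ = 0 with boundary conditions x(0) = a, x(1) = b. -/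
open Set Filter MeasureTheory intervalIntegral

/-- Let `ρ : [a,b] → ℝ` be continuous and strictly positive with `a < b`.
Define `F(x) = ∫_a^x ρ(t) dt` and `φ(ξ) = F⁻¹(ξ·F(b))` for `ξ ∈ [0,1]`
(the inverse is well defined: for each `ξ ∈ [0,1]` there is a unique
`x ∈ [a,b]` with `F(x) = ξ·F(b)`).  Then `φ` is a continuously
differentiable, strictly increasing bijection from `[0,1]` onto `[a,b]`
with `φ(0) = a` and `φ(1) = b`, and it satisfies
`ρ(φ(ξ))·φ'(ξ) = ∫_a^b ρ(t) dt` for all `ξ ∈ [0,1]`; that is, `φ` solves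
the mesh PDE `(ρ(x)x_ξ)_ξ = 0` with boundary conditions `x(0) = a`,
`x(1) = b`. -/
theorem mesh_generating_function_exists
    (a b : ℝ) (hab : a < b) (ρ : ℝ → ℝ)
    (hρc : ContinuousOn ρ (Set.Icc a b))
    (hρpos : ∀ x ∈ Set.Icc a b, 0 < ρ x) :
    (∀ ξ ∈ Set.Icc (0 : ℝ) 1, ∃! x, x ∈ Set.Icc a b ∧
        (∫ t in a..x, ρ t) = ξ * ∫ t in a..b, ρ t) ∧
    (∃ φ φ' : ℝ → ℝ,
      (∀ ξ ∈ Set.Icc (0 : ℝ) 1, φ ξ ∈ Set.Icc a b ∧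
         (∫ t in a..(φ ξ), ρ t) = ξ * ∫ t in a..b, ρ t) ∧
      φ 0 = a ∧ φ 1 = b ∧
      StrictMonoOn φ (Set.Icc 0 1) ∧
      φ '' Set.Icc 0 1 = Set.Icc a b ∧
      ContinuousOn φ' (Set.Icc 0 1) ∧
      (∀ ξ ∈ Set.Icc (0 : ℝ) 1,
        HasDerivWithinAt φ (φ' ξ) (Set.Icc 0 1) ξ ∧
        ρ (φ ξ) * φ' ξ = ∫ t in a..b, ρ t)) := by
  set I : ℝ := ∫ t in a..b, ρ t with hIdef
  -- the clamp of ℝ onto [a,b]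
  set c : ℝ → ℝ := fun t => max a (min b t) with hcdef
  have hcmem : ∀ t, c t ∈ Set.Icc a b :=
    fun t => ⟨le_max_left _ _, max_le hab.le (min_le_left _ _)⟩
  have hcid : ∀ t ∈ Set.Icc a b, c t = t := by
    intro t ht
    simp [hcdef, min_eq_right ht.2, max_eq_right ht.1]
  have hccont : Continuous c := continuous_const.max (continuous_const.min continuous_id)
  -- the extension of ρ to all of ℝ
  set r : ℝ → ℝ := fun t => ρ (c t) with hrdef
  have hrcont : Continuous r := hρc.comp_continuous hccont hcmem
  have hrpos : ∀ t, 0 < r t := fun t => hρpos _ (hcmem t)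
  have hreq : ∀ t ∈ Set.Icc a b, r t = ρ t := by
    intro t ht; rw [hrdef]; simp [hcid t ht]
  -- the extended antiderivative
  set F : ℝ → ℝ := fun x => ∫ t in a..x, r t with hFdef
  have hFd : ∀ x, HasDerivAt F (r x) x := fun x =>
    intervalIntegral.integral_hasDerivAt_right (hrcont.intervalIntegrable a x)
      hrcont.stronglyMeasurable.stronglyMeasurableAtFilter hrcont.continuousAt
  have hFcont : Continuous F := continuous_iff_continuousAt.2 fun x => (hFd x).continuousAt
  have hFmono : StrictMono F := by
    apply strictMono_of_deriv_pos
    intro x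
    rw [(hFd x).deriv]
    exact hrpos x
  have hFρ : ∀ x ∈ Set.Icc a b, F x = ∫ t in a..x, ρ t := by
    intro x hx
    apply intervalIntegral.integral_congr
    intro t ht
    rw [Set.uIcc_of_le hx.1] at ht
    exact hreq t ⟨ht.1, ht.2.trans hx.2⟩
  have hFa : F a = 0 := intervalIntegral.integral_same
  have hFb : F b = I := hFρ b ⟨hab.le, le_rfl⟩
  have hIpos : 0 < I := by
    rw [hIdef]
    apply intervalIntegral.intervalIntegral_pos_of_pos_on
    · exact (by rwa [Set.uIcc_of_le hab.le] : ContinuousOn ρ (Set.uIcc a b)).intervalIntegrable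
    · exact fun x hx => hρpos x ⟨hx.1.le, hx.2.le⟩
    · exact hab
  -- F is affine outside [a,b], hence tends to ±∞
  have hFabove : ∀ x, b ≤ x → F x = F b + (x - b) * r b := by
    intro x hx
    have h1 : F b + ∫ t in b..x, r t = F x :=
      intervalIntegral.integral_add_adjacent_intervals (hrcont.intervalIntegrable _ _)
        (hrcont.intervalIntegrable _ _)
    have h2 : (∫ t in b..x, r t) = (x - b) * r b := by
      have : ∀ t ∈ Set.uIcc b x, r t = r b := by
        intro t ht
        rw [Set.uIcc_of_le hx] at ht
        simp [hrdef, hcdef, min_eq_left ht.1, max_eq_right hab.le]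
      rw [intervalIntegral.integral_congr this, intervalIntegral.integral_const, smul_eq_mul]
    rw [← h1, h2]
  have hFbelow : ∀ x, x ≤ a → F x = (x - a) * r a := by
    intro x hx
    have h1 : F x + ∫ t in x..a, r t = F a :=
      intervalIntegral.integral_add_adjacent_intervals (hrcont.intervalIntegrable _ _)
        (hrcont.intervalIntegrable _ _)
    have h2 : (∫ t in x..a, r t) = (a - x) * r a := by
      have : ∀ t ∈ Set.uIcc x a, r t = r a := by
        intro t ht
        rw [Set.uIcc_of_le hx] at ht
        simp [hrdef, hcdef, min_eq_right (ht.2.trans hab.le), max_eq_left ht.2]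
      rw [intervalIntegral.integral_congr this, intervalIntegral.integral_const, smul_eq_mul]
    have := h1
    rw [hFa] at this
    nlinarith [h2, this]
  have htop : Tendsto F atTop atTop := by
    have h : Tendsto (fun x : ℝ => F b + (x - b) * r b) atTop atTop := by
      apply tendsto_atTop_add_const_left
      exact (tendsto_atTop_add_const_right _ _ tendsto_id).atTop_mul_const (hrpos b)
    exact h.congr' (by filter_upwards [eventually_ge_atTop b] with x hx using (hFabove x hx).symm)
  have hbot : Tendsto F atBot atBot := by
    have h : Tendsto (fun x : ℝ => (x - a) * r a) atBot atBot :=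
      Tendsto.atBot_mul_const (hrpos a) (tendsto_atBot_add_const_right _ _ tendsto_id)
    exact h.congr' (by filter_upwards [eventually_le_atBot a] with x hx using (hFbelow x hx).symm)
  have hFsurj : Function.Surjective F := hFcont.surjective htop hbot
  -- the order isomorphism and its inverse
  set e : ℝ ≃o ℝ := StrictMono.orderIsoOfSurjective F hFmono hFsurj with hedef
  have heF : ∀ x, e x = F x := fun x => rfl
  set g : ℝ → ℝ := fun y => e.symm y with hgdef
  have hgF : ∀ x, g (F x) = x := by
    intro x
    rw [hgdef]; simp only
    rw [← heF x]; exact e.symm_apply_apply x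
  have hFg : ∀ y, F (g y) = y := by
    intro y
    rw [← heF]; exact e.apply_symm_apply y
  have hgcont : Continuous g := by
    have := e.toHomeomorph.symm.continuous
    rwa [OrderIso.coe_toHomeomorph_symm] at this
  -- the mesh generating function
  set φ : ℝ → ℝ := fun ξ => g (ξ * I) with hφdef
  have hFφ : ∀ ξ, F (φ ξ) = ξ * I := fun ξ => hFg _
  have hφmem : ∀ ξ ∈ Set.Icc (0:ℝ) 1, φ ξ ∈ Set.Icc a b := by
    intro ξ hξ
    constructor
    · have : a = g (F a) := (hgF a).symm
      rw [this, hFa]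
      exact e.symm.monotone (mul_nonneg hξ.1 hIpos.le)
    · have : b = g (F b) := (hgF b).symm
      rw [this, hFb]
      exact e.symm.monotone (by nlinarith [hξ.2])
  have hρφ : ∀ ξ ∈ Set.Icc (0:ℝ) 1, (∫ t in a..(φ ξ), ρ t) = ξ * I := by
    intro ξ hξ
    rw [← hFρ _ (hφmem ξ hξ), hFφ]
  have hφsm : StrictMono φ := fun x y h =>
    e.symm.strictMono (mul_lt_mul_of_pos_right h hIpos)
  have hφ0 : φ 0 = a := by
    rw [hφdef]; simp only [zero_mul]
    have : a = g (F a) := (hgF a).symm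
    rw [this, hFa]
  have hφ1 : φ 1 = b := by
    rw [hφdef]; simp only [one_mul]
    have : b = g (F b) := (hgF b).symm
    rw [this, hFb]
  have hφcont : Continuous φ := hgcont.comp (continuous_id.mul continuous_const)
  -- derivative
  have hgd : ∀ y, HasDerivAt g (r (g y))⁻¹ y := fun y =>
    HasDerivAt.of_local_left_inverse hgcont.continuousAt (hFd (g y)) (hrpos _).ne'
      (Eventually.of_forall hFg)
  have hφd : ∀ ξ, HasDerivAt φ (I / r (φ ξ)) ξ := by
    intro ξ
    have h1 : HasDerivAt (fun x : ℝ => x * I) I ξ := by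
      simpa using (hasDerivAt_id ξ).mul_const I
    have h2 := (hgd (ξ * I)).comp ξ h1
    have h3 : I / r (φ ξ) = (r (g (ξ * I)))⁻¹ * I := by
      rw [hφdef]; simp only
      rw [div_eq_mul_inv, mul_comm]
    rw [h3]
    exact h2
  refine ⟨?_, φ, fun ξ => I / r (φ ξ), fun ξ hξ => ⟨hφmem ξ hξ, hρφ ξ hξ⟩, hφ0, hφ1,
    hφsm.strictMonoOn _, ?_, ?_, ?_⟩
  · -- unique solvability
    intro ξ hξ
    refine ⟨φ ξ, ⟨hφmem ξ hξ, hρφ ξ hξ⟩, ?_⟩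
    rintro x ⟨hx, hFx⟩
    have hx' : F x = ξ * I := by rw [hFρ x hx, hFx]
    calc x = g (F x) := (hgF x).symm
    _ = φ ξ := by rw [hx']
  · -- image
    apply Set.Subset.antisymm
    · rintro _ ⟨ξ, hξ, rfl⟩; exact hφmem ξ hξ
    · intro x hx
      refine ⟨F x / I, ⟨div_nonneg ?_ hIpos.le, (div_le_one hIpos).2 ?_⟩, ?_⟩
      · rw [← hFa]; exact hFmono.monotone hx.1
      · rw [← hFb]; exact hFmono.monotone hx.2
      · show g (F x / I * I) = x
        rw [div_mul_cancel₀ _ hIpos.ne', hgF]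
  · -- continuity of φ'
    exact (continuous_const.div (hrcont.comp hφcont) fun ξ => (hrpos _).ne').continuousOn
  · -- the ODE
    intro ξ hξ
    refine ⟨(hφd ξ).hasDerivWithinAt, ?_⟩
    have h := hreq (φ ξ) (hφmem ξ hξ)
    rw [← h]
    show r (φ ξ) * (I / r (φ ξ)) = I
    rw [mul_div_assoc']
    exact mul_div_cancel_left₀ I (hrpos _).ne'
end

section
/- Let ρ : [a,b] → ℝ be continuous and strictly positive with a < b. If φ₁, φ₂ : [0,1] → [a,b] are continuously differentiable functions with φ_j(0) = a, φ_j(1) = b, and each satisfies ρ(φ_j(ξ))·φ_j'(ξ) = C_j for some constant C_j (j = 1, 2), then C₁ = C₂ = ∫_a^b ρ(t) dt and φ₁(ξ) = φ₂(ξ) for all ξ ∈ [0,1]. In other words, the mesh PDE (ρ(x)x_ξ)_ξ = 0 with x(0) = a, x(1) = b has a unique C¹ solution. -/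
/-- Let `ρ : [a,b] → ℝ` be continuous and strictly positive with `a < b`.
If `φ₁, φ₂ : [0,1] → [a,b]` are continuously differentiable functions with
`φⱼ(0) = a`, `φⱼ(1) = b`, and each satisfies `ρ(φⱼ(ξ))·φⱼ'(ξ) = Cⱼ` for some
constant `Cⱼ` (`j = 1, 2`), then `C₁ = C₂ = ∫_a^b ρ(t) dt` and
`φ₁(ξ) = φ₂(ξ)` for all `ξ ∈ [0,1]`.  In other words, the mesh PDE
`(ρ(x)x_ξ)_ξ = 0` with `x(0) = a`, `x(1) = b` has a unique `C¹` solution. -/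
theorem mesh_pde_unique_solution
    (a b : ℝ) (hab : a < b) (ρ : ℝ → ℝ)
    (hρc : ContinuousOn ρ (Set.Icc a b))
    (hρpos : ∀ x ∈ Set.Icc a b, 0 < ρ x)
    (φ₁ φ₁' φ₂ φ₂' : ℝ → ℝ)
    (hmap₁ : Set.MapsTo φ₁ (Set.Icc 0 1) (Set.Icc a b))
    (hmap₂ : Set.MapsTo φ₂ (Set.Icc 0 1) (Set.Icc a b))
    (hd₁ : ∀ ξ ∈ Set.Icc (0 : ℝ) 1, HasDerivWithinAt φ₁ (φ₁' ξ) (Set.Icc 0 1) ξ)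
    (hc₁ : ContinuousOn φ₁' (Set.Icc 0 1))
    (hd₂ : ∀ ξ ∈ Set.Icc (0 : ℝ) 1, HasDerivWithinAt φ₂ (φ₂' ξ) (Set.Icc 0 1) ξ)
    (hc₂ : ContinuousOn φ₂' (Set.Icc 0 1))
    (h₁0 : φ₁ 0 = a) (h₁1 : φ₁ 1 = b)
    (h₂0 : φ₂ 0 = a) (h₂1 : φ₂ 1 = b)
    (C₁ C₂ : ℝ)
    (hC₁ : ∀ ξ ∈ Set.Icc (0 : ℝ) 1, ρ (φ₁ ξ) * φ₁' ξ = C₁)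
    (hC₂ : ∀ ξ ∈ Set.Icc (0 : ℝ) 1, ρ (φ₂ ξ) * φ₂' ξ = C₂) :
    C₁ = (∫ t in a..b, ρ t) ∧ C₂ = (∫ t in a..b, ρ t) ∧
    ∀ ξ ∈ Set.Icc (0 : ℝ) 1, φ₁ ξ = φ₂ ξ := by
  set ρ' : ℝ → ℝ := fun x => ρ (Set.projIcc a b hab.le x) with hρ'def
  have hρ'cont : Continuous ρ' :=
    hρc.comp_continuous (continuous_subtype_val.comp continuous_projIcc)
      fun x => Subtype.coe_prop _
  have hρ'eq : ∀ x ∈ Set.Icc a b, ρ' x = ρ x := by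
    intro x hx
    simp [hρ'def, Set.projIcc_of_mem hab.le hx]
  have hρ'pos : ∀ x, 0 < ρ' x := fun x => hρpos _ (Subtype.coe_prop _)
  set F : ℝ → ℝ := fun x => ∫ t in a..x, ρ' t with hFdef
  have hF : ∀ x, HasDerivAt F (ρ' x) x := fun x =>
    (hρ'cont.integral_hasStrictDerivAt a x).hasDerivAt
  have hFmono : StrictMono F := strictMono_of_hasDerivAt_pos hF hρ'pos
  have hFb : F b = ∫ t in a..b, ρ t := by
    refine intervalIntegral.integral_congr fun x hx => ?_
    exact hρ'eq x (by rwa [Set.uIcc_of_le hab.le] at hx)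
  -- main claim
  have key : ∀ (φ φ' : ℝ → ℝ), Set.MapsTo φ (Set.Icc 0 1) (Set.Icc a b) →
      (∀ ξ ∈ Set.Icc (0:ℝ) 1, HasDerivWithinAt φ (φ' ξ) (Set.Icc 0 1) ξ) →
      φ 0 = a → ∀ (C : ℝ), (∀ ξ ∈ Set.Icc (0:ℝ) 1, ρ (φ ξ) * φ' ξ = C) →
      ∀ ξ ∈ Set.Icc (0:ℝ) 1, F (φ ξ) = C * ξ := by
    intro φ φ' hmap hd h0 C hC
    have hφcont : ContinuousOn φ (Set.Icc 0 1) := fun ξ hξ =>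
      (hd ξ hξ).continuousWithinAt
    have hFcont : Continuous F :=
      continuous_iff_continuousAt.mpr fun x => (hF x).continuousAt
    refine eq_of_has_deriv_right_eq (f' := fun _ => C)
      (fun x hx => ?_) (fun x _ => ?_)
      (hFcont.comp_continuousOn hφcont)
      ((continuous_const.mul continuous_id).continuousOn) ?_
    · have hx' : x ∈ Set.Icc (0:ℝ) 1 := Set.Ico_subset_Icc_self hx
      have h1 : HasDerivWithinAt (F ∘ φ) (ρ' (φ x) * φ' x) (Set.Icc 0 1) x :=
        (hF (φ x)).comp_hasDerivWithinAt x (hd x hx')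
      have h2 : ρ' (φ x) * φ' x = C := by
        rw [hρ'eq _ (hmap hx')]; exact hC x hx'
      rw [h2] at h1
      refine h1.mono_of_mem_nhdsWithin ?_
      refine mem_nhdsWithin.mpr ⟨Set.Iio 1, isOpen_Iio, hx.2, ?_⟩
      rintro t ⟨ht1, ht2⟩
      exact ⟨le_trans hx'.1 ht2, le_of_lt ht1⟩
    · simpa using ((hasDerivAt_id x).const_mul C).hasDerivWithinAt
    · simp [Function.comp, h0, hFdef]
  have h0mem : (0:ℝ) ∈ Set.Icc (0:ℝ) 1 := by norm_num
  have h1mem : (1:ℝ) ∈ Set.Icc (0:ℝ) 1 := by norm_num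
  have k1 := key φ₁ φ₁' hmap₁ hd₁ h₁0 C₁ hC₁
  have k2 := key φ₂ φ₂' hmap₂ hd₂ h₂0 C₂ hC₂
  have e1 : C₁ = ∫ t in a..b, ρ t := by
    have := k1 1 h1mem; rw [h₁1, hFb] at this; linarith
  have e2 : C₂ = ∫ t in a..b, ρ t := by
    have := k2 1 h1mem; rw [h₂1, hFb] at this; linarith
  refine ⟨e1, e2, fun ξ hξ => hFmono.injective ?_⟩
  rw [k1 ξ hξ, k2 ξ hξ, e1, e2]
end

section
/- Let K, σ, λ₀, λ₁ be positive real numbers and let ρ : [0,1] → ℝ be the Bakhvalov mesh density function ρ(x) = max{1, K·λ₀·exp(−λ₀x/σ) + K·λ₁·exp(−λ₁(1−x)/σ)}. Then 1 ≤ ∫_0^1 ρ(x) dx ≤ 1 + 2Kσ. Consequently, for every integer N ≥ 1, any mesh 0 = x₀ < x₁ < ⋯ < x_N = 1 that equidistributes ρ has all mesh widths bounded uniformly in λ₀ and λ₁: x_i − x_{i−1} ≤ (1 + 2Kσ)/N for every i = 1, …, N. -/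
private lemma exp_interval_integral (c d b : ℝ) (hc : c ≠ 0) :
    ∫ x in (0:ℝ)..b, Real.exp (c * x + d)
      = (Real.exp (c * b + d) - Real.exp d) / c := by
  have h : ∀ x ∈ Set.uIcc (0:ℝ) b,
      HasDerivAt (fun y => Real.exp (c * y + d) / c) (Real.exp (c * x + d)) x := by
    intro x _
    have h1 : HasDerivAt (fun y : ℝ => c * y + d) c x := by
      simpa using ((hasDerivAt_id x).const_mul c).add_const d
    have h2 := (h1.exp).div_const c
    simpa [mul_comm, mul_div_assoc, mul_div_cancel_left₀ _ hc] using h2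
  have := intervalIntegral.integral_eq_sub_of_hasDerivAt h
    (Continuous.intervalIntegrable (by fun_prop) 0 b)
  simp only [mul_zero, zero_add] at this
  rw [this]
  ring

/-- Let `K, σ, λ₀, λ₁` be positive real numbers and let `ρ : [0,1] → ℝ` be the
Bakhvalov mesh density function
`ρ(x) = max{1, K·λ₀·exp(−λ₀x/σ) + K·λ₁·exp(−λ₁(1−x)/σ)}`.
Then `1 ≤ ∫_0^1 ρ(x) dx ≤ 1 + 2Kσ`.  Consequently, for every integer
`N ≥ 1`, any mesh `0 = x₀ < x₁ < ⋯ < x_N = 1` that equidistributes `ρ`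
has all mesh widths bounded uniformly in `λ₀` and `λ₁`:
`x_i − x_{i−1} ≤ (1 + 2Kσ)/N` for every `i = 1, …, N`. -/
theorem bakhvalov_density_integral_bounds_and_mesh_widths
    (K σ lam₀ lam₁ : ℝ)
    (hK : 0 < K) (hσ : 0 < σ) (hlam₀ : 0 < lam₀) (hlam₁ : 0 < lam₁)
    (ρ : ℝ → ℝ)
    (hρ : ∀ x : ℝ, ρ x = max 1
        (K * lam₀ * Real.exp (-(lam₀ * x) / σ)
          + K * lam₁ * Real.exp (-(lam₁ * (1 - x)) / σ))) :
    (1 ≤ ∫ x in (0:ℝ)..1, ρ x) ∧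
    ((∫ x in (0:ℝ)..1, ρ x) ≤ 1 + 2 * K * σ) ∧
    (∀ N : ℕ, 1 ≤ N → ∀ x : ℕ → ℝ,
      x 0 = 0 → x N = 1 → (∀ i < N, x i < x (i + 1)) →
      (∀ i < N, ∫ t in (x i)..(x (i + 1)), ρ t
          = (1 / (N : ℝ)) * ∫ t in (0:ℝ)..1, ρ t) →
      ∀ i < N, x (i + 1) - x i ≤ (1 + 2 * K * σ) / N) := by
  have hρfun : ρ = fun x => max 1
      (K * lam₀ * Real.exp (-(lam₀ * x) / σ)
        + K * lam₁ * Real.exp (-(lam₁ * (1 - x)) / σ)) := funext hρ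
  have hcont : Continuous ρ := by rw [hρfun]; fun_prop
  have hone : ∀ t : ℝ, (1:ℝ) ≤ ρ t := fun t => by rw [hρ]; exact le_max_left _ _
  have hii : ∀ a b : ℝ, IntervalIntegrable ρ MeasureTheory.volume a b :=
    fun a b => hcont.intervalIntegrable a b
  -- lower bound
  have hlow : (1:ℝ) ≤ ∫ x in (0:ℝ)..1, ρ x := by
    have := intervalIntegral.integral_mono_on (by norm_num : (0:ℝ) ≤ 1)
      (intervalIntegrable_const (c := (1:ℝ))) (hii 0 1) (fun t _ => hone t)
    simpa using this
  -- upper bound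
  have hup : (∫ x in (0:ℝ)..1, ρ x) ≤ 1 + 2 * K * σ := by
    set g : ℝ → ℝ := fun x => 1 + (K * lam₀ * Real.exp (-(lam₀ * x) / σ)
        + K * lam₁ * Real.exp (-(lam₁ * (1 - x)) / σ)) with hg
    have hρg : ∀ t ∈ Set.Icc (0:ℝ) 1, ρ t ≤ g t := by
      intro t _
      rw [hρ]
      have h1 : (0:ℝ) ≤ K * lam₀ * Real.exp (-(lam₀ * t) / σ)
          + K * lam₁ * Real.exp (-(lam₁ * (1 - t)) / σ) := by positivity
      have hgt : g t = 1 + (K * lam₀ * Real.exp (-(lam₀ * t) / σ)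
          + K * lam₁ * Real.exp (-(lam₁ * (1 - t)) / σ)) := rfl
      rw [hgt]
      exact max_le (by linarith) (by linarith)
    have hgi : IntervalIntegrable g MeasureTheory.volume 0 1 := by
      apply Continuous.intervalIntegrable; fun_prop
    have step : (∫ x in (0:ℝ)..1, ρ x) ≤ ∫ x in (0:ℝ)..1, g x :=
      intervalIntegral.integral_mono_on (by norm_num) (hii 0 1) hgi hρg
    have hc0 : (-(lam₀/σ)) ≠ 0 := neg_ne_zero.mpr (ne_of_gt (div_pos hlam₀ hσ))
    have hc1 : (lam₁/σ) ≠ 0 := ne_of_gt (div_pos hlam₁ hσ)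
    have int0 : (∫ x in (0:ℝ)..1, Real.exp (-(lam₀ * x) / σ))
        = (Real.exp ((-(lam₀/σ)) * 1 + 0) - Real.exp 0) / (-(lam₀/σ)) := by
      rw [show (fun x : ℝ => Real.exp (-(lam₀ * x) / σ))
          = fun x => Real.exp ((-(lam₀/σ)) * x + 0) from funext fun x => by
            congr 1; field_simp; ring]
      exact exp_interval_integral _ _ _ hc0
    have int1 : (∫ x in (0:ℝ)..1, Real.exp (-(lam₁ * (1 - x)) / σ))
        = (Real.exp ((lam₁/σ) * 1 + (-(lam₁/σ))) - Real.exp (-(lam₁/σ))) / (lam₁/σ) := by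
      rw [show (fun x : ℝ => Real.exp (-(lam₁ * (1 - x)) / σ))
          = fun x => Real.exp ((lam₁/σ) * x + (-(lam₁/σ))) from funext fun x => by
            congr 1; field_simp; ring]
      exact exp_interval_integral _ _ _ hc1
    have hbound0 : (∫ x in (0:ℝ)..1, Real.exp (-(lam₀ * x) / σ)) ≤ σ / lam₀ := by
      rw [int0]
      have hpos : (0:ℝ) < lam₀ / σ := div_pos hlam₀ hσ
      have heq : (Real.exp ((-(lam₀/σ)) * 1 + 0) - Real.exp 0) / (-(lam₀/σ))
          = (1 - Real.exp (-(lam₀/σ))) / (lam₀/σ) := by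
        rw [mul_one, add_zero, Real.exp_zero]; ring
      rw [heq]
      have h1 : (1 - Real.exp (-(lam₀/σ))) ≤ 1 := by
        linarith [Real.exp_pos (-(lam₀/σ))]
      calc (1 - Real.exp (-(lam₀/σ))) / (lam₀/σ) ≤ 1 / (lam₀/σ) := by gcongr
        _ = σ / lam₀ := one_div_div _ _
    have hbound1 : (∫ x in (0:ℝ)..1, Real.exp (-(lam₁ * (1 - x)) / σ)) ≤ σ / lam₁ := by
      rw [int1]
      have hpos : (0:ℝ) < lam₁ / σ := div_pos hlam₁ hσ
      have heq : (Real.exp ((lam₁/σ) * 1 + (-(lam₁/σ))) - Real.exp (-(lam₁/σ))) / (lam₁/σ)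
          = (1 - Real.exp (-(lam₁/σ))) / (lam₁/σ) := by
        rw [mul_one, add_neg_cancel, Real.exp_zero]
      rw [heq]
      have h1 : (1 - Real.exp (-(lam₁/σ))) ≤ 1 := by
        linarith [Real.exp_pos (-(lam₁/σ))]
      calc (1 - Real.exp (-(lam₁/σ))) / (lam₁/σ) ≤ 1 / (lam₁/σ) := by gcongr
        _ = σ / lam₁ := one_div_div _ _
    have hie0 : IntervalIntegrable (fun x => Real.exp (-(lam₀ * x) / σ))
        MeasureTheory.volume 0 1 := by apply Continuous.intervalIntegrable; fun_prop
    have hie1 : IntervalIntegrable (fun x => Real.exp (-(lam₁ * (1 - x)) / σ))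
        MeasureTheory.volume 0 1 := by apply Continuous.intervalIntegrable; fun_prop
    have hgsplit : (∫ x in (0:ℝ)..1, g x)
        = 1 + ((K * lam₀ * ∫ x in (0:ℝ)..1, Real.exp (-(lam₀ * x) / σ))
            + K * lam₁ * ∫ x in (0:ℝ)..1, Real.exp (-(lam₁ * (1 - x)) / σ)) := by
      rw [hg]
      rw [intervalIntegral.integral_add (intervalIntegrable_const)
        ((hie0.const_mul _).add (hie1.const_mul _)),
        intervalIntegral.integral_add (hie0.const_mul _) (hie1.const_mul _),
        intervalIntegral.integral_const_mul, intervalIntegral.integral_const_mul]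
      simp
    have : (∫ x in (0:ℝ)..1, g x) ≤ 1 + 2 * K * σ := by
      rw [hgsplit]
      have b0 : K * lam₀ * (∫ x in (0:ℝ)..1, Real.exp (-(lam₀ * x) / σ))
          ≤ K * lam₀ * (σ / lam₀) := by
        apply mul_le_mul_of_nonneg_left hbound0 (by positivity)
      have b1 : K * lam₁ * (∫ x in (0:ℝ)..1, Real.exp (-(lam₁ * (1 - x)) / σ))
          ≤ K * lam₁ * (σ / lam₁) := by
        apply mul_le_mul_of_nonneg_left hbound1 (by positivity)
      have e0 : K * lam₀ * (σ / lam₀) = K * σ := by field_simp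
      have e1 : K * lam₁ * (σ / lam₁) = K * σ := by field_simp
      rw [e0] at b0; rw [e1] at b1
      have h2 : 2 * K * σ = K * σ + K * σ := by ring
      linarith
    linarith
  refine ⟨hlow, hup, ?_⟩
  intro N hN x hx0 hxN hmono hequi i hi
  have hNpos : (0:ℝ) < N := by exact_mod_cast hN
  have hle : x i ≤ x (i + 1) := le_of_lt (hmono i hi)
  have h1 : x (i + 1) - x i ≤ ∫ t in (x i)..(x (i+1)), ρ t := by
    have := intervalIntegral.integral_mono_on hle
      (intervalIntegrable_const (c := (1:ℝ))) (hii _ _) (fun t _ => hone t)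
    simpa using this
  rw [hequi i hi] at h1
  calc x (i + 1) - x i ≤ (1 / (N:ℝ)) * ∫ t in (0:ℝ)..1, ρ t := h1
    _ ≤ (1 / (N:ℝ)) * (1 + 2 * K * σ) := by
        apply mul_le_mul_of_nonneg_left hup (by positivity)
    _ = (1 + 2 * K * σ) / N := by ring
end

section
/- Let K, σ, λ₀, λ₁ be positive real numbers, let ρ(x) = max{1, K·λ₀·exp(−λ₀x/σ) + K·λ₁·exp(−λ₁(1−x)/σ)} on [0,1], let N ≥ 1 be an integer, and let 0 = x₀ < x₁ < ⋯ < x_N = 1 be a mesh that equidistributes ρ. Set I = ∫_0^1 ρ(x) dx. If N satisfies I < K·σ·N, then the first mesh point satisfies x₁ ≤ (σ/λ₀)·ln( KσN / (KσN − I) ); in particular, since I ≤ 1 + 2Kσ, if N > (1 + 2Kσ)/(Kσ) then x₁ ≤ (σ/λ₀)·ln( KσN / (KσN − 1 − 2Kσ) ), so the first mesh interval is of length O(σ/(λ₀N)). The symmetric bound 1 − x_{N−1} ≤ (σ/λ₁)·ln( KσN / (KσN − I) ) holds at the right endpoint. -/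
lemma int_exp (c σ a b : ℝ) (hc : c ≠ 0) (hσ : σ ≠ 0) :
    ∫ t in a..b, Real.exp (-(c*t)/σ)
      = (σ/c) * (Real.exp (-(c*a)/σ) - Real.exp (-(c*b)/σ)) := by
  have h : ∀ t : ℝ, HasDerivAt (fun t => -(σ/c) * Real.exp (-(c*t)/σ))
      (Real.exp (-(c*t)/σ)) t := by
    intro t
    have heq : (fun t : ℝ => -(c*t)/σ) = fun t : ℝ => (-c/σ)*t := by
      funext t; ring
    have h1 : HasDerivAt (fun t : ℝ => -(c*t)/σ) (-c/σ) t := by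
      rw [heq]; simpa using (hasDerivAt_id t).const_mul (-c/σ)
    have h2 := (h1.exp).const_mul (-(σ/c))
    refine h2.congr_deriv ?_
    field_simp
  rw [intervalIntegral.integral_eq_sub_of_hasDerivAt (fun t _ => h t)
    (Continuous.intervalIntegrable (by fun_prop) a b)]
  ring

lemma int_exp' (c σ a b : ℝ) (hc : c ≠ 0) (hσ : σ ≠ 0) :
    ∫ t in a..b, Real.exp (-(c*(1-t))/σ)
      = (σ/c) * (Real.exp (-(c*(1-b))/σ) - Real.exp (-(c*(1-a))/σ)) := by
  have h : ∀ t : ℝ, HasDerivAt (fun t => (σ/c) * Real.exp (-(c*(1-t))/σ))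
      (Real.exp (-(c*(1-t))/σ)) t := by
    intro t
    have heq : (fun t : ℝ => -(c*(1-t))/σ) = fun t : ℝ => (c/σ)*t + (-c/σ) := by
      funext t; ring
    have h1 : HasDerivAt (fun t : ℝ => -(c*(1-t))/σ) (c/σ) t := by
      rw [heq]
      simpa using ((hasDerivAt_id t).const_mul (c/σ)).add_const (-c/σ)
    have h2 := (h1.exp).const_mul (σ/c)
    refine h2.congr_deriv ?_
    field_simp
  rw [intervalIntegral.integral_eq_sub_of_hasDerivAt (fun t _ => h t)
    (Continuous.intervalIntegrable (by fun_prop) a b)]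
  ring

lemma key (K σ lam Nr J u : ℝ) (hK : 0 < K) (hσ : 0 < σ) (hlam : 0 < lam)
    (hNr : 0 < Nr) (hJ : J < K*σ*Nr)
    (h : K*σ*(1 - Real.exp (-(lam*u)/σ)) ≤ J/Nr) :
    u ≤ (σ/lam) * Real.log (K*σ*Nr/(K*σ*Nr - J)) := by
  set E := Real.exp (-(lam*u)/σ) with hEdef
  have hA : 0 < K*σ*Nr := by positivity
  have hsub : 0 < K*σ*Nr - J := sub_pos.mpr hJ
  have hE : (K*σ*Nr - J)/(K*σ*Nr) ≤ E := by
    rw [div_le_iff₀ hA]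
    have h' : K*σ*(1-E)*Nr ≤ J := by
      have := mul_le_mul_of_nonneg_right h hNr.le
      rwa [div_mul_cancel₀ _ hNr.ne'] at this
    nlinarith
  have hpos : 0 < (K*σ*Nr - J)/(K*σ*Nr) := div_pos hsub hA
  have hlog : Real.log ((K*σ*Nr - J)/(K*σ*Nr)) ≤ -(lam*u)/σ := by
    calc Real.log ((K*σ*Nr - J)/(K*σ*Nr)) ≤ Real.log E := Real.log_le_log hpos hE
    _ = -(lam*u)/σ := Real.log_exp _
  have hrw : Real.log (K*σ*Nr/(K*σ*Nr - J)) = - Real.log ((K*σ*Nr - J)/(K*σ*Nr)) := by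
    rw [← Real.log_inv, inv_div]
  rw [hrw, div_mul_eq_mul_div, le_div_iff₀ hlam]
  have h2 := mul_le_mul_of_nonneg_left hlog hσ.le
  rw [mul_div_cancel₀ _ hσ.ne'] at h2
  linarith

/-- Let `K, σ, λ₀, λ₁` be positive reals, let
`ρ(x) = max{1, K·λ₀·exp(−λ₀x/σ) + K·λ₁·exp(−λ₁(1−x)/σ)}` on `[0,1]`,
let `N ≥ 1` be an integer, and let `0 = x₀ < x₁ < ⋯ < x_N = 1` be a mesh
that equidistributes `ρ`.  Set `I = ∫_0^1 ρ(x) dx`.  If `N` satisfies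
`I < KσN`, then the first mesh point satisfies
`x₁ ≤ (σ/λ₀)·ln(KσN / (KσN − I))` and, symmetrically, the bound
`1 − x_{N−1} ≤ (σ/λ₁)·ln(KσN / (KσN − I))` holds at the right endpoint;
in particular, since `I ≤ 1 + 2Kσ`, if `N > (1 + 2Kσ)/(Kσ)` then
`x₁ ≤ (σ/λ₀)·ln(KσN / (KσN − 1 − 2Kσ))`. -/
theorem bakhvalov_first_mesh_interval_bound
    (K σ lam₀ lam₁ : ℝ)
    (hK : 0 < K) (hσ : 0 < σ) (hlam₀ : 0 < lam₀) (hlam₁ : 0 < lam₁)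
    (ρ : ℝ → ℝ)
    (hρ : ∀ x : ℝ, ρ x = max 1
        (K * lam₀ * Real.exp (-(lam₀ * x) / σ)
          + K * lam₁ * Real.exp (-(lam₁ * (1 - x)) / σ)))
    (N : ℕ) (hN : 1 ≤ N) (x : ℕ → ℝ)
    (hx0 : x 0 = 0) (hxN : x N = 1)
    (hmono : ∀ i < N, x i < x (i + 1))
    (hequi : ∀ i < N, ∫ t in (x i)..(x (i + 1)), ρ t
        = (1 / (N : ℝ)) * ∫ s in (0:ℝ)..1, ρ s)
    (I : ℝ) (hI : I = ∫ s in (0:ℝ)..1, ρ s) :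
    (I < K * σ * N →
      x 1 ≤ (σ / lam₀) * Real.log (K * σ * N / (K * σ * N - I)) ∧
      1 - x (N - 1) ≤ (σ / lam₁) * Real.log (K * σ * N / (K * σ * N - I))) ∧
    ((1 + 2 * K * σ) / (K * σ) < (N : ℝ) →
      x 1 ≤ (σ / lam₀) *
        Real.log (K * σ * N / (K * σ * N - 1 - 2 * K * σ))) := by
  have hρeq : ρ = fun x => max 1
      (K * lam₀ * Real.exp (-(lam₀ * x) / σ)
        + K * lam₁ * Real.exp (-(lam₁ * (1 - x)) / σ)) := funext hρ
  have hcont : Continuous ρ := by rw [hρeq]; exact continuous_const.max (by fun_prop)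
  have hNr : (0:ℝ) < (N:ℝ) := by exact_mod_cast hN
  -- the left bound
  have hleft : K*σ*(1 - Real.exp (-(lam₀ * x 1)/σ)) ≤ I/(N:ℝ) := by
    have he0 := hequi 0 (by omega)
    have hle : ∫ t in (x 0)..(x 1), K*lam₀*Real.exp (-(lam₀*t)/σ)
        ≤ ∫ t in (x 0)..(x 1), ρ t := by
      apply intervalIntegral.integral_mono_on (hmono 0 (by omega)).le
        (Continuous.intervalIntegrable (by fun_prop) _ _)
        (hcont.intervalIntegrable _ _)
      intro t _
      rw [hρ t]
      refine le_max_of_le_right ?_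
      have : 0 ≤ K * lam₁ * Real.exp (-(lam₁ * (1 - t)) / σ) := by positivity
      linarith
    rw [intervalIntegral.integral_const_mul, int_exp lam₀ σ _ _ hlam₀.ne' hσ.ne',
      he0, ← hI] at hle
    rw [hx0] at hle
    simp only [mul_zero, neg_zero, zero_div, Real.exp_zero] at hle
    calc K*σ*(1 - Real.exp (-(lam₀ * x 1)/σ))
        = K * lam₀ * ((σ/lam₀) * (1 - Real.exp (-(lam₀ * x 1) / σ))) := by
          field_simp
      _ ≤ 1 / (N:ℝ) * I := hle
      _ = I/(N:ℝ) := by ring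
  -- the right bound
  have hright : K*σ*(1 - Real.exp (-(lam₁ * (1 - x (N-1)))/σ)) ≤ I/(N:ℝ) := by
    have hidx : N - 1 + 1 = N := by omega
    have heN := hequi (N-1) (by omega)
    rw [hidx, hxN] at heN
    have hlt' : x (N-1) < 1 := by
      have := hmono (N-1) (by omega); rwa [hidx, hxN] at this
    have hle : ∫ t in (x (N-1))..(1:ℝ), K*lam₁*Real.exp (-(lam₁*(1-t))/σ)
        ≤ ∫ t in (x (N-1))..(1:ℝ), ρ t := by
      apply intervalIntegral.integral_mono_on hlt'.le
        (Continuous.intervalIntegrable (by fun_prop) _ _)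
        (hcont.intervalIntegrable _ _)
      intro t _
      rw [hρ t]
      refine le_max_of_le_right ?_
      have : 0 ≤ K * lam₀ * Real.exp (-(lam₀ * t) / σ) := by positivity
      linarith
    rw [intervalIntegral.integral_const_mul, int_exp' lam₁ σ _ _ hlam₁.ne' hσ.ne',
      heN, ← hI] at hle
    simp only [sub_self, mul_zero, neg_zero, zero_div, Real.exp_zero] at hle
    calc K*σ*(1 - Real.exp (-(lam₁ * (1 - x (N-1)))/σ))
        = K * lam₁ * ((σ/lam₁) * (1 - Real.exp (-(lam₁ * (1 - x (N-1))) / σ))) := by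
          field_simp
      _ ≤ 1 / (N:ℝ) * I := hle
      _ = I/(N:ℝ) := by ring
  have part1 : I < K * σ * N →
      x 1 ≤ (σ / lam₀) * Real.log (K * σ * N / (K * σ * N - I)) ∧
      1 - x (N - 1) ≤ (σ / lam₁) * Real.log (K * σ * N / (K * σ * N - I)) := by
    intro hlt
    exact ⟨key K σ lam₀ (N:ℝ) I (x 1) hK hσ hlam₀ hNr hlt hleft,
      key K σ lam₁ (N:ℝ) I (1 - x (N-1)) hK hσ hlam₁ hNr hlt hright⟩
  refine ⟨part1, ?_⟩
  intro hN2
  -- I ≤ 1 + 2Kσ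
  have hIub : I ≤ 1 + 2*K*σ := by
    have hle : ∫ s in (0:ℝ)..1, ρ s ≤ ∫ t in (0:ℝ)..1,
        (1 + K*lam₀*Real.exp (-(lam₀*t)/σ) + K*lam₁*Real.exp (-(lam₁*(1-t))/σ)) := by
      apply intervalIntegral.integral_mono_on zero_le_one
        (hcont.intervalIntegrable _ _)
        (Continuous.intervalIntegrable (by fun_prop) _ _)
      intro t _
      rw [hρ t]
      apply max_le
      · have h1 : 0 ≤ K * lam₀ * Real.exp (-(lam₀ * t) / σ) := by positivity
        have h2 : 0 ≤ K * lam₁ * Real.exp (-(lam₁ * (1 - t)) / σ) := by positivity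
        linarith
      · linarith
    have hcalc : ∫ t in (0:ℝ)..1,
        (1 + K*lam₀*Real.exp (-(lam₀*t)/σ) + K*lam₁*Real.exp (-(lam₁*(1-t))/σ))
        = 1 + K*lam₀*((σ/lam₀)*(1 - Real.exp (-(lam₀*1)/σ)))
          + K*lam₁*((σ/lam₁)*(1 - Real.exp (-(lam₁*1)/σ))) := by
      rw [intervalIntegral.integral_add, intervalIntegral.integral_add,
        intervalIntegral.integral_const_mul, intervalIntegral.integral_const_mul,
        int_exp lam₀ σ _ _ hlam₀.ne' hσ.ne', int_exp' lam₁ σ _ _ hlam₁.ne' hσ.ne']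
      · norm_num
      · exact Continuous.intervalIntegrable (by fun_prop) _ _
      · exact Continuous.intervalIntegrable (by fun_prop) _ _
      · exact Continuous.intervalIntegrable (by fun_prop) _ _
      · exact Continuous.intervalIntegrable (by fun_prop) _ _
    rw [hcalc] at hle
    have e0 : 0 < Real.exp (-(lam₀*1)/σ) := Real.exp_pos _
    have e1 : 0 < Real.exp (-(lam₁*1)/σ) := Real.exp_pos _
    have hK0 : K*lam₀*((σ/lam₀)*(1 - Real.exp (-(lam₀*1)/σ))) ≤ K*σ := by
      rw [show K*lam₀*((σ/lam₀)*(1 - Real.exp (-(lam₀*1)/σ)))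
          = K*σ*(1 - Real.exp (-(lam₀*1)/σ)) by field_simp]
      nlinarith [mul_pos (mul_pos hK hσ) e0]
    have hK1 : K*lam₁*((σ/lam₁)*(1 - Real.exp (-(lam₁*1)/σ))) ≤ K*σ := by
      rw [show K*lam₁*((σ/lam₁)*(1 - Real.exp (-(lam₁*1)/σ)))
          = K*σ*(1 - Real.exp (-(lam₁*1)/σ)) by field_simp]
      nlinarith [mul_pos (mul_pos hK hσ) e1]
    rw [hI]
    linarith
  have hKσN : 1 + 2*K*σ < K*σ*(N:ℝ) := by
    rw [div_lt_iff₀ (by positivity)] at hN2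
    nlinarith
  have hlt : I < K*σ*(N:ℝ) := lt_of_le_of_lt hIub hKσN
  have hx1 := (part1 hlt).1
  have hA : (0:ℝ) < K*σ*(N:ℝ) := by positivity
  have hb : 0 < K*σ*(N:ℝ) - 1 - 2*K*σ := by linarith
  have hc : K*σ*(N:ℝ) - 1 - 2*K*σ ≤ K*σ*(N:ℝ) - I := by linarith
  have hdiv : K*σ*(N:ℝ)/(K*σ*(N:ℝ) - I) ≤ K*σ*(N:ℝ)/(K*σ*(N:ℝ) - 1 - 2*K*σ) :=
    div_le_div_of_nonneg_left hA.le hb hc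
  have hlog := Real.log_le_log (div_pos hA (by linarith)) hdiv
  calc x 1 ≤ (σ/lam₀) * Real.log (K*σ*(N:ℝ)/(K*σ*(N:ℝ) - I)) := hx1
    _ ≤ (σ/lam₀) * Real.log (K*σ*(N:ℝ)/(K*σ*(N:ℝ) - 1 - 2*K*σ)) :=
      mul_le_mul_of_nonneg_left hlog (by positivity)
end
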